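/- Let |X| = pq with p, q prime and p ≥ 3. Then Fact X is isomorphic to MO_n where n = (pq)!/(p!q!) if p ≠ q and n = (pq)!/(2·p!·q!) if p = q. -/

import Mathlib

/-- A pair `(θ, φ)` of equivalence relations on `X` is a factor pair if the natural map
`X → X/θ × X/φ` is a bijection. -/
def IsFactorPair {X : Type*} (θ φ : Setoid X) : Prop :=
  Function.Bijective (fun x : X => (Quotient.mk θ x, Quotient.mk φ x))

/-- The elements of `Fact X`: factor pairs of `X`. -/
def FactorPair (X : Type*) : Type _ := {p : Setoid X × Setoid X // IsFactorPair p.1 p.2}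

/-- Two equivalence relations permute if their relational compositions agree. -/
def Permutes {X : Type*} (θ ψ : Setoid X) : Prop :=
  ∀ x z : X, (∃ y, θ.r x y ∧ ψ.r y z) ↔ (∃ y, ψ.r x y ∧ θ.r y z)

/-- The partial order of `Fact X`: `(θ₁,θ₂) ≤ (ψ₁,ψ₂)` iff `θ₁ ⊆ ψ₁`, `ψ₂ ⊆ θ₂`,
and `θ₁` permutes with `ψ₂`. -/
def FactorPair.le {X : Type*} (p q : FactorPair X) : Prop :=
  p.1.1 ≤ q.1.1 ∧ q.1.2 ≤ p.1.2 ∧ Permutes p.1.1 q.1.2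

/-- The orthocomplementation of `Fact X`: `(θ₁,θ₂)' = (θ₂,θ₁)`. -/
def FactorPair.perp {X : Type*} (p : FactorPair X) : FactorPair X :=
  ⟨(p.1.2, p.1.1), by
    have h := p.2
    exact ((Equiv.prodComm _ _).bijective).comp h⟩

/-- The orthomodular poset `MO n`: bottom, top, and `2n` middle elements forming `n`
orthocomplementary pairs. -/
inductive MO (n : ℕ) : Type
  | bot : MO n
  | top : MO n
  | atom : Fin n → MO n
  | coatom : Fin n → MO n

/-- The order of `MO n`. -/
def MO.le {n : ℕ} : MO n → MO n → Prop
  | .bot, _ => True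
  | _, .top => True
  | .atom i, .atom j => i = j
  | .coatom i, .coatom j => i = j
  | _, _ => False

/-- The orthocomplementation of `MO n`. -/
def MO.perp {n : ℕ} : MO n → MO n
  | .bot => .top
  | .top => .bot
  | .atom i => .coatom i
  | .coatom i => .atom i

set_option autoImplicit false
set_option maxHeartbeats 1000000
set_option linter.unusedVariables false
set_option linter.deprecated false

noncomputable section Aux
open Function
variable {X : Type*}

instance setoidFinite [Finite X] : Finite (Setoid X) :=
  Finite.of_injective (fun s => s.r) (fun s t h => Setoid.ext (fun a b => iff_of_eq (congrFun (congrFun h a) b)))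

instance factorPairFinite [Finite X] : Finite (FactorPair X) := by
  unfold FactorPair; infer_instance


lemma top_rel (a b : X) : (⊤ : Setoid X) a b := trivial
lemma bot_rel_iff (a b : X) : (⊥ : Setoid X) a b ↔ a = b := Iff.rfl

instance quotNonempty [Nonempty X] (s : Setoid X) : Nonempty (Quotient s) :=
  Nonempty.map (Quotient.mk s) ‹_›

/-- bottom factor pair -/
def botFP (X : Type*) : FactorPair X := by
  refine ⟨(⊥, ⊤), ?_, ?_⟩
  · intro x y h
    have h1 := congrArg Prod.fst h
    exact Quotient.eq.mp h1
  · rintro ⟨a, t⟩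
    refine ⟨a.out, ?_⟩
    have h2 : (Quotient.mk ⊤ (Quotient.out a) : Quotient (⊤ : Setoid X)) = t := by
      induction t using Quotient.ind with
      | _ b => exact Quotient.sound trivial
    simp only [h2, Quotient.out_eq]

def topFP (X : Type*) : FactorPair X := (botFP X).perp

lemma perp_perp (r : FactorPair X) : r.perp.perp = r := rfl

lemma perp_botFP : (botFP X).perp = topFP X := rfl
lemma perp_topFP : (topFP X).perp = botFP X := rfl

lemma botFP_ne_topFP (x y : X) (hxy : x ≠ y) : botFP X ≠ topFP X := by
  intro h
  have h1 : ((botFP X).1.1 : Setoid X) = (topFP X).1.1 := by rw [h]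
  have hbt : (⊥ : Setoid X) = ⊤ := h1
  have h2 : (⊥ : Setoid X) x y := by rw [hbt]; trivial
  exact hxy h2

def qcard {X : Type*} (s : Setoid X) : ℕ := Nat.card (Quotient s)

lemma fp_card_mul [Finite X] (r : FactorPair X) :
    qcard r.1.1 * qcard r.1.2 = Nat.card X := by
  have e := Nat.card_eq_of_bijective _ r.2
  rw [Nat.card_prod] at e
  exact e.symm

lemma fp_fst_bot_iff (r : FactorPair X) : r.1.1 = ⊥ ↔ r.1.2 = ⊤ := by
  constructor
  · intro h
    refine Setoid.ext fun a b => iff_of_true ?_ trivial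
    obtain ⟨y, hy⟩ := r.2.2 (Quotient.mk _ a, Quotient.mk _ b)
    have h1 : Quotient.mk r.1.1 y = Quotient.mk r.1.1 a := congrArg Prod.fst hy
    have h2 : Quotient.mk r.1.2 y = Quotient.mk r.1.2 b := congrArg Prod.snd hy
    have hya : y = a := by
      have := Quotient.eq.mp h1
      rw [h] at this
      exact this
    rw [hya] at h2
    exact Quotient.eq.mp h2
  · intro h
    refine Setoid.ext fun a b => Iff.trans ?_ (bot_rel_iff a b).symm
    constructor
    · intro hab
      apply r.2.1
      have h2 : Quotient.mk r.1.2 a = Quotient.mk r.1.2 b := by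
        apply Quotient.sound
        rw [h]; trivial
      exact Prod.ext (Quotient.sound hab) h2
    · rintro rfl; exact r.1.1.refl a

lemma fp_fst_top_iff (r : FactorPair X) : r.1.1 = ⊤ ↔ r.1.2 = ⊥ := by
  have h := fp_fst_bot_iff r.perp
  simp only [FactorPair.perp] at h
  exact ⟨fun hh => h.mpr hh, fun hh => h.mp hh⟩

lemma qcard_top_iff [Finite X] [Nonempty X] (s : Setoid X) : qcard s = 1 ↔ s = ⊤ := by
  constructor
  · intro h
    have hsub : Subsingleton (Quotient s) := (Nat.card_eq_one_iff_unique.mp h).1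
    exact Setoid.ext fun a b => iff_of_true (Quotient.eq.mp (hsub.allEq _ _)) trivial
  · rintro rfl
    rw [qcard, Nat.card_eq_one_iff_unique]
    refine ⟨⟨fun a b => ?_⟩, inferInstance⟩
    induction a using Quotient.ind
    induction b using Quotient.ind
    exact Quotient.sound trivial

lemma qcard_bot [Finite X] : qcard (⊥ : Setoid X) = Nat.card X := by
  refine (Nat.card_eq_of_bijective (Quotient.mk ⊥) ⟨?_, Quotient.mk_surjective⟩).symm
  intro a b h
  exact Quotient.eq.mp h

lemma qcard_bot_iff [Finite X] (s : Setoid X) : s = ⊥ ↔ qcard s = Nat.card X := by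
  constructor
  · rintro rfl; exact qcard_bot
  · intro h
    have hbij : Function.Bijective (Quotient.mk s) := by
      rw [Nat.bijective_iff_surjective_and_card]
      exact ⟨Quotient.mk_surjective, h.symm⟩
    refine Setoid.ext fun a b => Iff.trans ?_ (bot_rel_iff a b).symm
    exact ⟨fun hab => hbij.1 (Quotient.sound hab), fun hab => hab ▸ s.refl a⟩


lemma fp_permutes (r : FactorPair X) : Permutes r.1.1 r.1.2 := by
  have key : ∀ x z : X, ∃ y, r.1.1 x y ∧ r.1.2 y z := by
    intro x z
    obtain ⟨y, hy⟩ := r.2.2 (Quotient.mk _ x, Quotient.mk _ z)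
    have h1 : Quotient.mk r.1.1 y = Quotient.mk r.1.1 x := congrArg Prod.fst hy
    have h2 : Quotient.mk r.1.2 y = Quotient.mk r.1.2 z := congrArg Prod.snd hy
    exact ⟨y, r.1.1.symm (Quotient.eq.mp h1), Quotient.eq.mp h2⟩
  have key2 : ∀ x z : X, ∃ y, r.1.2 x y ∧ r.1.1 y z := by
    intro x z
    obtain ⟨y, h1, h2⟩ := key z x
    exact ⟨y, r.1.2.symm h2, r.1.1.symm h1⟩
  intro x z
  exact iff_of_true (key x z) (key2 x z)

lemma permutes_bot_left (s : Setoid X) : Permutes ⊥ s := by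
  intro x z
  constructor
  · rintro ⟨y, h1, h2⟩
    have : x = y := h1
    exact ⟨z, this ▸ h2, rfl⟩
  · rintro ⟨y, h1, h2⟩
    have : y = z := h2
    exact ⟨x, rfl, this ▸ h1⟩

lemma permutes_bot_right (s : Setoid X) : Permutes s ⊥ := by
  intro x z
  constructor
  · rintro ⟨y, h1, h2⟩
    have : y = z := h2
    exact ⟨x, rfl, this ▸ h1⟩
  · rintro ⟨y, h1, h2⟩
    have : x = y := h1
    exact ⟨z, this ▸ h2, rfl⟩

lemma le_refl_fp (r : FactorPair X) : FactorPair.le r r :=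
  ⟨le_rfl, le_rfl, fp_permutes r⟩

lemma botFP_le (r : FactorPair X) : FactorPair.le (botFP X) r :=
  ⟨bot_le, le_top, permutes_bot_left _⟩

lemma le_topFP (r : FactorPair X) : FactorPair.le r (topFP X) :=
  ⟨le_top, bot_le, permutes_bot_right _⟩

lemma le_botFP_iff (r : FactorPair X) : FactorPair.le r (botFP X) ↔ r = botFP X := by
  constructor
  · rintro ⟨h1, -, -⟩
    have hb : r.1.1 = ⊥ := le_bot_iff.mp h1
    have ht : r.1.2 = ⊤ := (fp_fst_bot_iff r).mp hb
    exact Subtype.ext (Prod.ext hb ht)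
  · rintro rfl; exact le_refl_fp _

lemma topFP_le_iff (r : FactorPair X) : FactorPair.le (topFP X) r ↔ r = topFP X := by
  constructor
  · rintro ⟨h1, -, -⟩
    have hb : r.1.1 = ⊤ := top_le_iff.mp h1
    have ht : r.1.2 = ⊥ := (fp_fst_top_iff r).mp hb
    exact Subtype.ext (Prod.ext hb ht)
  · rintro rfl; exact le_refl_fp _

/-- each θ₁-class is in bijection with `Quotient θ₂` -/
lemma fp_class_card [Finite X] (r : FactorPair X) (x : X) :
    Nat.card {y : X // r.1.1 x y} = qcard r.1.2 := by
  refine Nat.card_eq_of_bijective (fun y => Quotient.mk r.1.2 y.1) ⟨?_, ?_⟩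
  · rintro ⟨y, hy⟩ ⟨y', hy'⟩ h
    have h1 : Quotient.mk r.1.1 y = Quotient.mk r.1.1 y' :=
      Quotient.sound (r.1.1.trans (r.1.1.symm hy) hy')
    have := r.2.1 (a₁ := y) (a₂ := y') (Prod.ext h1 h)
    exact Subtype.ext this
  · intro t
    induction t using Quotient.ind with
    | _ z =>
      obtain ⟨y, hy⟩ := r.2.2 (Quotient.mk _ x, Quotient.mk _ z)
      have h1 := congrArg Prod.fst hy
      have h2 := congrArg Prod.snd hy
      exact ⟨⟨y, r.1.1.symm (Quotient.eq.mp h1)⟩, h2⟩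

/-- if r ≤ s componentwise (θ₁ ≤ ψ₁) then qcard θ₂ divides qcard ψ₂ -/
lemma fp_dvd_of_le [Finite X] (r s : FactorPair X) (h : r.1.1 ≤ s.1.1) :
    qcard r.1.2 ∣ qcard s.1.2 := by
  classical
  rcases isEmpty_or_nonempty X with he | ⟨⟨x⟩⟩
  · have h0 : ∀ u : Setoid X, qcard u = 0 := by
      intro u
      have : IsEmpty (Quotient u) := ⟨fun t => Quotient.ind (motive := fun _ => False) (fun z => (he.false z).elim) t⟩
      exact Nat.card_of_isEmpty
    rw [h0, h0]
  -- the ψ₁-class of x decomposes into θ₁-classes, each of size qcard θ₂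
  set C := {y : X // s.1.1 x y}
  have hC : Nat.card C = qcard s.1.2 := fp_class_card s x
  set T := {t : Quotient r.1.1 // ∃ y : X, s.1.1 x y ∧ Quotient.mk r.1.1 y = t}
  have hbij : Function.Bijective
      (fun y : C => ((⟨Quotient.mk r.1.1 y.1, y.1, y.2, rfl⟩ : T), Quotient.mk r.1.2 y.1)) := by
    constructor
    · rintro ⟨y, hy⟩ ⟨y', hy'⟩ hh
      have h1 : Quotient.mk r.1.1 y = Quotient.mk r.1.1 y' :=
        congrArg (fun a => (Prod.fst a).1) hh
      have h2 : Quotient.mk r.1.2 y = Quotient.mk r.1.2 y' := congrArg Prod.snd hh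
      exact Subtype.ext (r.2.1 (Prod.ext h1 h2))
    · rintro ⟨⟨t, y₀, hy₀, ht⟩, u⟩
      induction u using Quotient.ind with
      | _ z =>
        obtain ⟨y, hy⟩ := r.2.2 (t, Quotient.mk _ z)
        have h1 : Quotient.mk r.1.1 y = t := congrArg Prod.fst hy
        have h2 : Quotient.mk r.1.2 y = Quotient.mk r.1.2 z := congrArg Prod.snd hy
        have hyy₀ : r.1.1 y y₀ := Quotient.eq.mp (h1.trans ht.symm)
        have hyC : s.1.1 x y := s.1.1.trans hy₀ (s.1.1.symm (h hyy₀))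
        refine ⟨⟨y, hyC⟩, ?_⟩
        exact Prod.ext (Subtype.ext h1) h2
  have hcount : qcard s.1.2 = Nat.card T * qcard r.1.2 := by
    rw [← hC, Nat.card_eq_of_bijective _ hbij, Nat.card_prod]; rfl
  exact ⟨Nat.card T, by rw [hcount, Nat.mul_comm]⟩

/-- finer with equal quotient cardinality implies equal -/
lemma setoid_eq_of_le_of_card [Finite X] {s t : Setoid X} (h : s ≤ t)
    (hc : qcard s = qcard t) : s = t := by
  classical
  set g : Quotient s → Quotient t := Quotient.map' id (fun a b hab => h hab) with hg
  have hgmk : ∀ x : X, g (Quotient.mk s x) = Quotient.mk t x := fun x => rfl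
  have hsurj : Function.Surjective g := by
    intro u
    induction u using Quotient.ind with
    | _ z => exact ⟨Quotient.mk s z, rfl⟩
  have hbij : Function.Bijective g := by
    rw [Nat.bijective_iff_surjective_and_card]
    exact ⟨hsurj, hc⟩
  refine Setoid.ext fun a b => ⟨fun hab => h hab, fun hab => ?_⟩
  have h1 : g (Quotient.mk s a) = g (Quotient.mk s b) := by
    rw [hgmk, hgmk]
    exact Quotient.sound hab
  exact Quotient.eq.mp (hbij.1 h1)


section Counting
variable [Finite X]

def FPc (X : Type*) (m : ℕ) : Type _ := {r : FactorPair X // qcard r.1.1 = m}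

instance (m : ℕ) : Finite (FPc X m) := by unfold FPc; infer_instance

variable {m k : ℕ}

def fstMap (e : X ≃ Fin m × Fin k) (x : X) : Fin m := (e x).1
def sndMap (e : X ≃ Fin m × Fin k) (x : X) : Fin k := (e x).2

lemma fstMap_surj (hk : k ≠ 0) (e : X ≃ Fin m × Fin k) : Function.Surjective (fstMap e) := by
  intro a
  refine ⟨e.symm (a, ⟨0, Nat.pos_of_ne_zero hk⟩), ?_⟩
  simp [fstMap]

lemma sndMap_surj (hm : m ≠ 0) (e : X ≃ Fin m × Fin k) : Function.Surjective (sndMap e) := by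
  intro b
  refine ⟨e.symm (⟨0, Nat.pos_of_ne_zero hm⟩, b), ?_⟩
  simp [sndMap]

def kerPair (e : X ≃ Fin m × Fin k) : FactorPair X := by
  refine ⟨(Setoid.ker (fstMap e), Setoid.ker (sndMap e)), ?_, ?_⟩
  · intro a b h
    have h1 : fstMap e a = fstMap e b := Setoid.ker_def.mp (Quotient.eq.mp (congrArg Prod.fst h))
    have h2 : sndMap e a = sndMap e b := Setoid.ker_def.mp (Quotient.eq.mp (congrArg Prod.snd h))
    exact e.injective (Prod.ext h1 h2)
  · rintro ⟨t, u⟩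
    induction t using Quotient.ind with
    | _ a =>
      induction u using Quotient.ind with
      | _ b =>
        refine ⟨e.symm ((e a).1, (e b).2), ?_⟩
        refine Prod.ext (Quotient.sound ?_) (Quotient.sound ?_)
        · exact Setoid.ker_def.mpr (by simp [fstMap])
        · exact Setoid.ker_def.mpr (by simp [sndMap])

lemma qcard_kerPair_fst (hk : k ≠ 0) (e : X ≃ Fin m × Fin k) :
    qcard (kerPair e).1.1 = m := by
  have h := Setoid.quotientKerEquivOfSurjective _ (fstMap_surj hk e)
  show Nat.card (Quotient (Setoid.ker (fstMap e))) = m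
  rw [Nat.card_congr h, Nat.card_eq_fintype_card, Fintype.card_fin]

lemma qcard_kerPair_snd (hm : m ≠ 0) (e : X ≃ Fin m × Fin k) :
    qcard (kerPair e).1.2 = k := by
  have h := Setoid.quotientKerEquivOfSurjective _ (sndMap_surj hm e)
  show Nat.card (Quotient (Setoid.ker (sndMap e))) = k
  rw [Nat.card_congr h, Nat.card_eq_fintype_card, Fintype.card_fin]

variable (hk : k ≠ 0)

def Fmap (hk : k ≠ 0) (e : X ≃ Fin m × Fin k) : FPc X m := ⟨kerPair e, qcard_kerPair_fst hk e⟩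

lemma Fmap_eq_iff (e : X ≃ Fin m × Fin k) (r : FPc X m) :
    Fmap hk e = r ↔ Setoid.ker (fstMap e) = r.1.1.1 ∧ Setoid.ker (sndMap e) = r.1.1.2 := by
  constructor
  · rintro rfl; exact ⟨rfl, rfl⟩
  · rintro ⟨h1, h2⟩
    exact Subtype.ext (Subtype.ext (Prod.ext h1 h2))

/-- the descended bijection on the first quotient -/
def uFst (r : FPc X m) (e : {e : X ≃ Fin m × Fin k // Fmap hk e = r}) :
    Quotient r.1.1.1 ≃ Fin m := by
  have h1 : Setoid.ker (fstMap e.1) = r.1.1.1 := ((Fmap_eq_iff hk e.1 r).mp e.2).1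
  refine Equiv.ofBijective (Quotient.lift (fstMap e.1)
    (fun a b hab => Setoid.ker_def.mp (h1 ▸ hab : Setoid.ker (fstMap e.1) a b)) ) ⟨?_, ?_⟩
  · intro t t'
    induction t using Quotient.ind with
    | _ a =>
      induction t' using Quotient.ind with
      | _ b =>
        intro hab
        exact Quotient.sound (h1 ▸ (Setoid.ker_def.mpr hab) : _)
  · intro a
    obtain ⟨x, hx⟩ := fstMap_surj hk e.1 a
    exact ⟨Quotient.mk _ x, hx⟩

def uSnd (r : FPc X m) (e : {e : X ≃ Fin m × Fin k // Fmap hk e = r}) (hm : m ≠ 0) :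
    Quotient r.1.1.2 ≃ Fin k := by
  have h1 : Setoid.ker (sndMap e.1) = r.1.1.2 := ((Fmap_eq_iff hk e.1 r).mp e.2).2
  refine Equiv.ofBijective (Quotient.lift (sndMap e.1)
    (fun a b hab => Setoid.ker_def.mp (h1 ▸ hab : Setoid.ker (sndMap e.1) a b)) ) ⟨?_, ?_⟩
  · intro t t'
    induction t using Quotient.ind with
    | _ a =>
      induction t' using Quotient.ind with
      | _ b =>
        intro hab
        exact Quotient.sound (h1 ▸ (Setoid.ker_def.mpr hab) : _)
  · intro b
    obtain ⟨x, hx⟩ := sndMap_surj hm e.1 b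
    exact ⟨Quotient.mk _ x, hx⟩

lemma uFst_mk (r : FPc X m) (e : {e : X ≃ Fin m × Fin k // Fmap hk e = r}) (x : X) :
    uFst hk r e (Quotient.mk _ x) = fstMap e.1 x := rfl

lemma uSnd_mk (r : FPc X m) (e : {e : X ≃ Fin m × Fin k // Fmap hk e = r}) (hm : m ≠ 0) (x : X) :
    uSnd hk r e hm (Quotient.mk _ x) = sndMap e.1 x := rfl

/-- the fiber of `Fmap` over any `r` is equivalent to a product of permutation groups -/
def fiberEquiv (hm : m ≠ 0) (r : FPc X m)
    (e₀ : {e : X ≃ Fin m × Fin k // Fmap hk e = r}) :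
    {e : X ≃ Fin m × Fin k // Fmap hk e = r} ≃ Equiv.Perm (Fin m) × Equiv.Perm (Fin k) := by
  refine ⟨fun e => ((uFst hk r e₀).symm.trans (uFst hk r e),
                    (uSnd hk r e₀ hm).symm.trans (uSnd hk r e hm)),
          fun στ => ⟨e₀.1.trans (Equiv.prodCongr στ.1 στ.2), ?_⟩, ?_, ?_⟩
  · -- membership: Fmap (e₀.trans (σ×τ)) = r
    rw [Fmap_eq_iff]
    obtain ⟨h1, h2⟩ := (Fmap_eq_iff hk e₀.1 r).mp e₀.2
    constructor
    · rw [← h1]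
      refine Setoid.ext fun a b => ?_
      rw [Setoid.ker_def, Setoid.ker_def]
      show στ.1 (fstMap e₀.1 a) = στ.1 (fstMap e₀.1 b) ↔ _
      exact στ.1.injective.eq_iff
    · rw [← h2]
      refine Setoid.ext fun a b => ?_
      rw [Setoid.ker_def, Setoid.ker_def]
      show στ.2 (sndMap e₀.1 a) = στ.2 (sndMap e₀.1 b) ↔ _
      exact στ.2.injective.eq_iff
  · -- left inverse
    rintro ⟨e, he⟩
    apply Subtype.ext
    apply Equiv.ext
    intro x
    show (_ , _) = e x
    refine Prod.ext ?_ ?_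
    · show (uFst hk r ⟨e, he⟩) ((uFst hk r e₀).symm (fstMap e₀.1 x)) = (e x).1
      rw [show fstMap e₀.1 x = uFst hk r e₀ (Quotient.mk _ x) from rfl, Equiv.symm_apply_apply]
      rfl
    · show (uSnd hk r ⟨e, he⟩ hm) ((uSnd hk r e₀ hm).symm (sndMap e₀.1 x)) = (e x).2
      rw [show sndMap e₀.1 x = uSnd hk r e₀ hm (Quotient.mk _ x) from rfl, Equiv.symm_apply_apply]
      rfl
  · -- right inverse
    rintro ⟨σ, τ⟩
    set e₁ : {e : X ≃ Fin m × Fin k // Fmap hk e = r} := ⟨e₀.1.trans (Equiv.prodCongr σ τ), by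
      rw [Fmap_eq_iff]
      obtain ⟨h1, h2⟩ := (Fmap_eq_iff hk e₀.1 r).mp e₀.2
      constructor
      · rw [← h1]
        refine Setoid.ext fun a b => ?_
        rw [Setoid.ker_def, Setoid.ker_def]
        show σ (fstMap e₀.1 a) = σ (fstMap e₀.1 b) ↔ _
        exact σ.injective.eq_iff
      · rw [← h2]
        refine Setoid.ext fun a b => ?_
        rw [Setoid.ker_def, Setoid.ker_def]
        show τ (sndMap e₀.1 a) = τ (sndMap e₀.1 b) ↔ _
        exact τ.injective.eq_iff⟩
    refine Prod.ext ?_ ?_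
    · apply Equiv.ext
      intro a
      show uFst hk r e₁ ((uFst hk r e₀).symm a) = σ a
      have key : ∀ t, uFst hk r e₁ t = σ (uFst hk r e₀ t) := by
        intro t
        induction t using Quotient.ind with
        | _ x => rfl
      rw [key, Equiv.apply_symm_apply]
    · apply Equiv.ext
      intro b
      show uSnd hk r e₁ hm ((uSnd hk r e₀ hm).symm b) = τ b
      have key : ∀ t, uSnd hk r e₁ hm t = τ (uSnd hk r e₀ hm t) := by
        intro t
        induction t using Quotient.ind with
        | _ x => rfl
      rw [key, Equiv.apply_symm_apply]

lemma fiber_nonempty (hm : m ≠ 0) (hX : Nat.card X = m * k) (r : FPc X m) :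
    Nonempty {e : X ≃ Fin m × Fin k // Fmap hk e = r} := by
  have hq2 : qcard r.1.1.2 = k := by
    have h1 := fp_card_mul r.1
    rw [r.2, hX] at h1
    exact Nat.eq_of_mul_eq_mul_left (Nat.pos_of_ne_zero hm) h1
  set α : Quotient r.1.1.1 ≃ Fin m := Finite.equivFinOfCardEq r.2
  set β : Quotient r.1.1.2 ≃ Fin k := Finite.equivFinOfCardEq hq2
  set e : X ≃ Fin m × Fin k := (Equiv.ofBijective _ r.1.2).trans (Equiv.prodCongr α β)
  refine ⟨e, ?_⟩
  rw [Fmap_eq_iff]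
  constructor
  · refine Setoid.ext fun a b => ?_
    rw [Setoid.ker_def]
    show α (Quotient.mk _ a) = α (Quotient.mk _ b) ↔ _
    rw [α.injective.eq_iff]
    exact Quotient.eq
  · refine Setoid.ext fun a b => ?_
    rw [Setoid.ker_def]
    show β (Quotient.mk _ a) = β (Quotient.mk _ b) ↔ _
    rw [β.injective.eq_iff]
    exact Quotient.eq

lemma card_FPc (m k : ℕ) (hm : m ≠ 0) (hk : k ≠ 0) (hX : Nat.card X = m * k) :
    Nat.card (FPc X m) * (m.factorial * k.factorial) = (m * k).factorial := by
  classical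
  have big : Nonempty ((X ≃ Fin m × Fin k) ≃ FPc X m × (Equiv.Perm (Fin m) × Equiv.Perm (Fin k))) := by
    refine ⟨((Equiv.sigmaFiberEquiv (Fmap hk)).symm.trans
      (Equiv.sigmaCongrRight fun r => fiberEquiv hk hm r
        (Classical.choice (fiber_nonempty hk hm hX r)))).trans
      (Equiv.sigmaEquivProd _ _)⟩
  obtain ⟨E⟩ := big
  have h1 : Nat.card (X ≃ Fin m × Fin k) = Nat.card (FPc X m) * (m.factorial * k.factorial) := by
    rw [Nat.card_congr E, Nat.card_prod, Nat.card_prod]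
    congr 1
    rw [Nat.card_eq_fintype_card, Nat.card_eq_fintype_card, Fintype.card_perm,
      Fintype.card_perm, Fintype.card_fin, Fintype.card_fin]
  rw [← h1]
  -- card of equiv type
  have eX : X ≃ Fin m × Fin k :=
    (Finite.equivFinOfCardEq hX).trans finProdFinEquiv.symm
  rw [Nat.card_congr (Equiv.equivCongr eX (Equiv.refl _)), Nat.card_eq_fintype_card]
  have h2 : Fintype.card (Fin m × Fin k ≃ Fin m × Fin k) = (Fintype.card (Fin m × Fin k)).factorial :=
    Fintype.card_equiv (Equiv.refl _)
  rw [h2, Fintype.card_prod, Fintype.card_fin, Fintype.card_fin]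

end Counting

lemma involutionPairing {α : Type*} [Finite α] (f : α → α) (h1 : ∀ x, f (f x) = x)
    (h2 : ∀ x, f x ≠ x) :
    ∃ (n : ℕ) (e : α ≃ Fin n × Bool), Nat.card α = 2 * n ∧
      ∀ x, e (f x) = ((e x).1, !(e x).2) := by
  classical
  set s : Setoid α := ⟨fun x y => y = x ∨ y = f x, by
    refine ⟨fun x => Or.inl rfl, ?_, ?_⟩
    · rintro x y (rfl | rfl)
      · exact Or.inl rfl
      · exact Or.inr (h1 x).symm
    · rintro x y z (rfl | rfl) (rfl | rfl)
      · exact Or.inl rfl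
      · exact Or.inr rfl
      · exact Or.inr rfl
      · exact Or.inl (h1 x)⟩ with hs
  have rel_out : ∀ x : α, x = (Quotient.mk s x).out ∨ x = f ((Quotient.mk s x).out) := by
    intro x
    have h := Quotient.out_eq (Quotient.mk s x)
    exact Quotient.eq.mp h
  have mk_f : ∀ x : α, Quotient.mk s (f x) = Quotient.mk s x :=
    fun x => Quotient.sound (Or.inr (h1 x).symm)
  set E : α ≃ Quotient s × Bool :=
    { toFun := fun x => (Quotient.mk s x, if x = (Quotient.mk s x).out then true else false)
      invFun := fun v => if v.2 then v.1.out else f v.1.out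
      left_inv := by
        intro x
        by_cases hx : x = (Quotient.mk s x).out
        · simp only [if_pos hx, if_pos rfl]
          exact hx.symm
        · simp only [if_neg hx, if_neg (by exact Bool.false_ne_true)]
          show f (Quotient.mk s x).out = x
          rcases rel_out x with ho | ho
          · exact absurd ho hx
          · exact ho.symm
      right_inv := by
        rintro ⟨c, b⟩
        cases b
        · show (Quotient.mk s (f c.out), _) = (c, false)
          refine Prod.ext ?_ ?_
          · show Quotient.mk s (f c.out) = c
            rw [mk_f, Quotient.out_eq]
          · show (if f c.out = (Quotient.mk s (f c.out)).out then true else false) = false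
            rw [if_neg]
            rw [mk_f, Quotient.out_eq]
            exact h2 _
        · show (Quotient.mk s c.out, _) = (c, true)
          refine Prod.ext ?_ ?_
          · exact Quotient.out_eq c
          · show (if c.out = (Quotient.mk s c.out).out then true else false) = true
            rw [if_pos]
            rw [Quotient.out_eq] } with hE
  refine ⟨Nat.card (Quotient s), E.trans (Equiv.prodCongr (Finite.equivFinOfCardEq rfl) (Equiv.refl Bool)), ?_, ?_⟩
  · rw [Nat.card_congr E, Nat.card_prod, Nat.card_eq_fintype_card (α := Bool), Fintype.card_bool,
      Nat.mul_comm]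
  · intro x
    have hfst : (E (f x)).1 = (E x).1 := mk_f x
    have hsnd : (E (f x)).2 = !(E x).2 := by
      show (if f x = (Quotient.mk s (f x)).out then true else false)
         = !(if x = (Quotient.mk s x).out then true else false)
      rw [mk_f]
      by_cases hx : x = (Quotient.mk s x).out
      · rw [if_pos hx, if_neg (fun hfx => h2 x (hfx.trans hx.symm))]
        rfl
      · rcases rel_out x with ho | ho
        · exact absurd ho hx
        · rw [if_neg hx, if_pos ((congrArg f ho).trans (h1 _))]
          rfl
    show (Finite.equivFinOfCardEq rfl (E (f x)).1, (E (f x)).2) = (_, _)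
    rw [hfst, hsnd]
    rfl

section Classify
variable [Finite X] {p q : ℕ}

lemma dvd_mul_primes {p q d : ℕ} (hp : p.Prime) (hq : q.Prime) (hd : d ∣ p * q)
    (h1 : d ≠ 1) (h2 : d ≠ p * q) : d = p ∨ d = q := by
  by_cases hpd : p ∣ d
  · obtain ⟨d', rfl⟩ := hpd
    have hd' : d' ∣ q := by
      have := (mul_dvd_mul_iff_left (a := p) (Nat.Prime.ne_zero hp)).mp hd
      exact this
    rcases (Nat.Prime.eq_one_or_self_of_dvd hq d' hd') with rfl | rfl
    · exact Or.inl (Nat.mul_one p)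
    · exact absurd rfl h2
  · have hco : Nat.Coprime p d := (Nat.Prime.coprime_iff_not_dvd hp).mpr hpd
    have hdq : d ∣ q := (Nat.Coprime.dvd_of_dvd_mul_left hco.symm) hd
    rcases (Nat.Prime.eq_one_or_self_of_dvd hq d hdq) with rfl | rfl
    · exact absurd rfl h1
    · exact Or.inr rfl

lemma topFP_fst : (topFP X).1.1 = (⊤ : Setoid X) := rfl
lemma topFP_snd : (topFP X).1.2 = (⊥ : Setoid X) := rfl
lemma botFP_fst : (botFP X).1.1 = (⊥ : Setoid X) := rfl
lemma botFP_snd : (botFP X).1.2 = (⊤ : Setoid X) := rfl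

variable (hp : p.Prime) (hq : q.Prime) (hcard : Nat.card X = p * q)
include hp hq hcard

lemma nonempty_of_card : Nonempty X := by
  have h0 : 0 < Nat.card X := by
    rw [hcard]
    exact Nat.mul_pos hp.pos hq.pos
  exact (Nat.card_pos_iff.mp h0).1

omit hp hq hcard in
lemma eq_topFP_iff (r : FactorPair X) : r = topFP X ↔ r.1.1 = ⊤ := by
  constructor
  · rintro rfl; rfl
  · intro h
    exact Subtype.ext (Prod.ext h ((fp_fst_top_iff r).mp h))

omit hp hq hcard in
lemma eq_botFP_iff (r : FactorPair X) : r = botFP X ↔ r.1.1 = ⊥ := by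
  constructor
  · rintro rfl; rfl
  · intro h
    exact Subtype.ext (Prod.ext h ((fp_fst_bot_iff r).mp h))

lemma middle_iff (r : FactorPair X) :
    (r ≠ botFP X ∧ r ≠ topFP X) ↔ (qcard r.1.1 = p ∨ qcard r.1.1 = q) := by
  have hne : Nonempty X := nonempty_of_card hp hq hcard
  constructor
  · rintro ⟨hb, ht⟩
    refine dvd_mul_primes hp hq ?_ ?_ ?_
    · exact ⟨qcard r.1.2, by rw [← hcard]; exact (fp_card_mul r).symm⟩
    · intro h1
      exact ht ((eq_topFP_iff r).mpr ((qcard_top_iff r.1.1).mp h1))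
    · intro h2
      exact hb ((eq_botFP_iff r).mpr ((qcard_bot_iff r.1.1).mpr (h2.trans hcard.symm)))
  · intro h
    constructor
    · intro hb
      have h1 : qcard r.1.1 = p * q := by
        rw [(eq_botFP_iff r).mp hb]
        rw [show qcard (⊥ : Setoid X) = Nat.card X from qcard_bot, hcard]
      rcases h with h | h
      · rw [h1] at h
        have hq1 : q = 1 := Nat.eq_of_mul_eq_mul_left hp.pos (by rw [h, Nat.mul_one])
        exact hq.ne_one hq1
      · rw [h1] at h
        have hp1 : p = 1 := Nat.eq_of_mul_eq_mul_right hq.pos (by rw [h, Nat.one_mul])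
        exact hp.ne_one hp1
    · intro ht
      have h1 : qcard r.1.1 = 1 := by
        rw [(eq_topFP_iff r).mp ht]
        exact (qcard_top_iff (⊤ : Setoid X)).mpr rfl
      rcases h with h | h <;> rw [h1] at h
      · exact hp.ne_one h.symm
      · exact hq.ne_one h.symm

lemma snd_card (r : FactorPair X) (h : qcard r.1.1 = p) : qcard r.1.2 = q := by
  have h1 := fp_card_mul r
  rw [h, hcard] at h1
  exact Nat.eq_of_mul_eq_mul_left hp.pos h1

lemma snd_card' (r : FactorPair X) (h : qcard r.1.1 = q) : qcard r.1.2 = p := by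
  have h1 := fp_card_mul r
  rw [h, hcard, Nat.mul_comm p q] at h1
  exact Nat.eq_of_mul_eq_mul_left hq.pos h1

lemma middle_le (r s : FactorPair X) (hm : r ≠ botFP X ∧ r ≠ topFP X)
    (hm' : s ≠ botFP X ∧ s ≠ topFP X) (hle : FactorPair.le r s) : r = s := by
  have hr1 := (middle_iff hp hq hcard r).mp hm
  have hs1 := (middle_iff hp hq hcard s).mp hm'
  have hr2 : (qcard r.1.2).Prime := by
    rcases hr1 with h | h
    · rw [snd_card hp hq hcard r h]; exact hq
    · rw [snd_card' hp hq hcard r h]; exact hp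
  have hs2 : (qcard s.1.2).Prime := by
    rcases hs1 with h | h
    · rw [snd_card hp hq hcard s h]; exact hq
    · rw [snd_card' hp hq hcard s h]; exact hp
  have hdvd := fp_dvd_of_le r s hle.1
  have heq2 : qcard r.1.2 = qcard s.1.2 := (Nat.prime_dvd_prime_iff_eq hr2 hs2).mp hdvd
  have heq1 : qcard r.1.1 = qcard s.1.1 := by
    have h1 := fp_card_mul r
    have h2 := fp_card_mul s
    rw [heq2] at h1
    rw [← h2] at h1
    exact Nat.eq_of_mul_eq_mul_right (Nat.pos_of_ne_zero hs2.ne_zero) h1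
  have e1 : r.1.1 = s.1.1 := setoid_eq_of_le_of_card hle.1 heq1
  have e2 : s.1.2 = r.1.2 := setoid_eq_of_le_of_card hle.2.1 heq2.symm
  exact Subtype.ext (Prod.ext e1 e2.symm)

omit hp hq hcard in
lemma fp_fst_ne_snd (r : FactorPair X) (h : r.1.1 ≠ ⊤) : r.1.1 ≠ r.1.2 := by
  intro heq
  obtain ⟨a, b, hab⟩ : ∃ a b : X, ¬ r.1.1 a b := by
    by_contra hc
    push_neg at hc
    exact h (Setoid.ext fun a b => iff_of_true (hc a b) trivial)
  obtain ⟨y, hy⟩ := r.2.2 (Quotient.mk _ a, Quotient.mk _ b)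
  have h1 : r.1.1 y a := Quotient.eq.mp (congrArg Prod.fst hy)
  have h2 : r.1.2 y b := Quotient.eq.mp (congrArg Prod.snd hy)
  rw [← heq] at h2
  exact hab (r.1.1.trans (r.1.1.symm h1) h2)

omit hp hq hcard in
lemma perp_middle (r : FactorPair X) (hm : r ≠ botFP X ∧ r ≠ topFP X) :
    r.perp ≠ botFP X ∧ r.perp ≠ topFP X := by
  constructor
  · intro h
    have h2 : r.perp.perp = (botFP X).perp := by rw [h]
    rw [perp_perp, perp_botFP] at h2
    exact hm.2 h2
  · intro h
    have h2 : r.perp.perp = (topFP X).perp := by rw [h]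
    rw [perp_perp, perp_topFP] at h2
    exact hm.1 h2

end Classify


lemma MO_le_top {n : ℕ} (x : MO n) : MO.le x .top := by cases x <;> trivial
lemma MO_bot_le {n : ℕ} (x : MO n) : MO.le .bot x := by cases x <;> trivial

def Middle (X : Type*) : Type _ := {r : FactorPair X // r ≠ botFP X ∧ r ≠ topFP X}

instance [Finite X] : Finite (Middle X) := by unfold Middle; infer_instance

lemma assemble [Finite X] (hbt : botFP X ≠ topFP X) (n : ℕ)
    (e' : Middle X ≃ Fin n × Bool)
    (he' : ∀ r : Middle X, e' ⟨r.1.perp, perp_middle r.1 r.2⟩ = ((e' r).1, !(e' r).2))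
    (hmid : ∀ r s : FactorPair X, (r ≠ botFP X ∧ r ≠ topFP X) → (s ≠ botFP X ∧ s ≠ topFP X) →
      FactorPair.le r s → r = s) :
    ∃ e : FactorPair X ≃ MO n,
      (∀ r s : FactorPair X, FactorPair.le r s ↔ MO.le (e r) (e s)) ∧
      (∀ r : FactorPair X, e (FactorPair.perp r) = MO.perp (e r)) := by
  classical
  set E : FactorPair X → MO n := fun r =>
    if h1 : r = botFP X then MO.bot else if h2 : r = topFP X then MO.top else
      (cond (e' ⟨r, h1, h2⟩).2 (MO.atom (e' ⟨r, h1, h2⟩).1) (MO.coatom (e' ⟨r, h1, h2⟩).1)) with hEdef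
  set D : MO n → FactorPair X := fun o => match o with
    | .bot => botFP X
    | .top => topFP X
    | .atom i => (e'.symm (i, true)).1
    | .coatom i => (e'.symm (i, false)).1 with hDdef
  have E_bot : E (botFP X) = MO.bot := dif_pos rfl
  have hnbt : topFP X ≠ botFP X := fun h => hbt h.symm
  have E_top : E (topFP X) = MO.top := by
    show (if h1 : topFP X = botFP X then MO.bot else if h2 : topFP X = topFP X then MO.top else _) = MO.top
    rw [dif_neg hnbt, dif_pos rfl]
  have E_mid : ∀ (r : FactorPair X) (h1 : r ≠ botFP X) (h2 : r ≠ topFP X),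
      E r = cond (e' ⟨r, h1, h2⟩).2 (MO.atom (e' ⟨r, h1, h2⟩).1) (MO.coatom (e' ⟨r, h1, h2⟩).1) := by
    intro r h1 h2
    rw [hEdef]
    simp only [dif_neg h1, dif_neg h2]
  have hDE : ∀ r, D (E r) = r := by
    intro r
    by_cases h1 : r = botFP X
    · rw [h1, E_bot]
    · by_cases h2 : r = topFP X
      · rw [h2, E_top]
      · rw [E_mid r h1 h2]
        rcases hv : e' ⟨r, h1, h2⟩ with ⟨i, b⟩
        cases b
        · show (e'.symm (i, false)).1 = r
          rw [← hv]; exact congrArg Subtype.val (e'.symm_apply_apply _)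
        · show (e'.symm (i, true)).1 = r
          rw [← hv]; exact congrArg Subtype.val (e'.symm_apply_apply _)
  have hED : ∀ o, E (D o) = o := by
    intro o
    cases o with
    | bot => exact E_bot
    | top => exact E_top
    | atom i =>
      show E (e'.symm (i, true)).1 = MO.atom i
      obtain ⟨h1, h2⟩ := (e'.symm (i, true)).2
      rw [E_mid _ h1 h2]
      have hsub : (⟨(e'.symm (i, true)).1, h1, h2⟩ : Middle X) = e'.symm (i, true) :=
        Subtype.ext rfl
      rw [hsub, Equiv.apply_symm_apply]
      rfl
    | coatom i =>
      show E (e'.symm (i, false)).1 = MO.coatom i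
      obtain ⟨h1, h2⟩ := (e'.symm (i, false)).2
      rw [E_mid _ h1 h2]
      have hsub : (⟨(e'.symm (i, false)).1, h1, h2⟩ : Middle X) = e'.symm (i, false) :=
        Subtype.ext rfl
      rw [hsub, Equiv.apply_symm_apply]
      rfl
  refine ⟨⟨E, D, hDE, hED⟩, ?_, ?_⟩
  · intro r s
    show FactorPair.le r s ↔ MO.le (E r) (E s)
    by_cases hs2 : s = topFP X
    · rw [hs2, E_top]
      exact iff_of_true (le_topFP r) (MO_le_top _)
    by_cases hr1 : r = botFP X
    · rw [hr1, E_bot]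
      exact iff_of_true (botFP_le s) (MO_bot_le _)
    by_cases hr2 : r = topFP X
    · rw [hr2, E_top]
      refine iff_of_false (fun h => hs2 ((topFP_le_iff s).mp h)) ?_
      by_cases hs1 : s = botFP X
      · rw [hs1, E_bot]
        exact fun h => h
      · rw [E_mid s hs1 hs2]
        rcases hw : e' ⟨s, hs1, hs2⟩ with ⟨j, b⟩
        cases b
        · exact fun h => h
        · exact fun h => h
    by_cases hs1 : s = botFP X
    · rw [hs1, E_bot]
      refine iff_of_false (fun h => hr1 ((le_botFP_iff r).mp h)) ?_
      rw [E_mid r hr1 hr2]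
      rcases hv : e' ⟨r, hr1, hr2⟩ with ⟨i, b⟩
      cases b
      · exact fun h => h
      · exact fun h => h
    · have hrs : FactorPair.le r s ↔ r = s :=
        ⟨fun h => hmid r s ⟨hr1, hr2⟩ ⟨hs1, hs2⟩ h, fun h => h ▸ le_refl_fp r⟩
      have hrseq : (r = s) ↔ e' ⟨r, hr1, hr2⟩ = e' ⟨s, hs1, hs2⟩ := by
        refine Iff.trans ?_ (e'.apply_eq_iff_eq (x := (⟨r, hr1, hr2⟩ : Middle X)) (y := (⟨s, hs1, hs2⟩ : Middle X))).symm
        exact ⟨fun h => Subtype.ext h, fun h => congrArg Subtype.val h⟩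
      rw [hrs, hrseq, E_mid r hr1 hr2, E_mid s hs1 hs2]
      rcases hv : e' ⟨r, hr1, hr2⟩ with ⟨i, b⟩
      rcases hw : e' ⟨s, hs1, hs2⟩ with ⟨j, b'⟩
      cases b <;> cases b'
      · exact ⟨fun h => congrArg Prod.fst h, fun h => by rw [show i = j from h]⟩
      · exact iff_of_false (fun h => Bool.false_ne_true (congrArg Prod.snd h)) (fun h => h)
      · exact iff_of_false (fun h => Bool.false_ne_true (congrArg Prod.snd h).symm) (fun h => h)
      · exact ⟨fun h => congrArg Prod.fst h, fun h => by rw [show i = j from h]⟩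
  · intro r
    show E r.perp = MO.perp (E r)
    by_cases h1 : r = botFP X
    · rw [h1, perp_botFP, E_top, E_bot]
      rfl
    by_cases h2 : r = topFP X
    · rw [h2, perp_topFP, E_bot, E_top]
      rfl
    · have hm := perp_middle r ⟨h1, h2⟩
      rw [E_mid r.perp hm.1 hm.2, E_mid r h1 h2]
      have h3 : e' ⟨r.perp, hm.1, hm.2⟩ = ((e' ⟨r, h1, h2⟩).1, !(e' ⟨r, h1, h2⟩).2) :=
        he' ⟨r, h1, h2⟩
      rw [h3]
      rcases hv : e' ⟨r, h1, h2⟩ with ⟨i, b⟩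
      cases b <;> rfl



lemma pairingOfSwap {M : Type*} {P Q : M → Prop} (pp : M → M)
    (hperp : ∀ r, pp (pp r) = r)
    (hPQ : ∀ r, P r ∨ Q r) (hPnotQ : ∀ r, P r → ¬ Q r)
    (hPperp : ∀ r, P r → Q (pp r)) (hQperp : ∀ r, Q r → P (pp r))
    (N : ℕ) (φ : {r : M // P r} ≃ Fin N) :
    ∃ e : M ≃ Fin N × Bool, ∀ r, e (pp r) = ((e r).1, !(e r).2) := by
  classical
  have hQP : ∀ r, ¬ P r → P (pp r) := fun r h => hQperp r ((hPQ r).resolve_left h)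
  refine ⟨⟨fun r => if h : P r then (φ ⟨r, h⟩, true) else (φ ⟨pp r, hQP r h⟩, false),
    fun v => if v.2 then (φ.symm v.1).1 else pp (φ.symm v.1).1, ?_, ?_⟩, ?_⟩
  · intro r
    by_cases h : P r
    · simp only [dif_pos h]
      show (φ.symm (φ ⟨r, h⟩)).1 = r
      rw [Equiv.symm_apply_apply]
    · simp only [dif_neg h]
      show pp (φ.symm (φ ⟨pp r, hQP r h⟩)).1 = r
      rw [Equiv.symm_apply_apply]
      exact hperp r
  · rintro ⟨i, b⟩
    cases b
    · have hnp : ¬ P (pp (φ.symm i).1) := fun h => hPnotQ _ h (hPperp _ (φ.symm i).2)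
      show (if h : P (pp (φ.symm i).1) then (φ ⟨pp (φ.symm i).1, h⟩, true)
        else (φ ⟨pp (pp (φ.symm i).1), hQP _ h⟩, false)) = (i, false)
      rw [dif_neg hnp]
      have h3 : (⟨pp (pp (φ.symm i).1), hQP _ hnp⟩ : {r : M // P r}) = φ.symm i :=
        Subtype.ext (hperp _)
      rw [h3, Equiv.apply_symm_apply]
    · show (if h : P (φ.symm i).1 then (φ ⟨(φ.symm i).1, h⟩, true)
        else (φ ⟨pp (φ.symm i).1, hQP _ h⟩, false)) = (i, true)
      rw [dif_pos (φ.symm i).2]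
      have h3 : (⟨(φ.symm i).1, (φ.symm i).2⟩ : {r : M // P r}) = φ.symm i :=
        Subtype.ext rfl
      rw [h3, Equiv.apply_symm_apply]
  · intro r
    by_cases h : P r
    · have hnp : ¬ P (pp r) := fun hh => hPnotQ _ hh (hPperp _ h)
      show (if hh : P (pp r) then (φ ⟨pp r, hh⟩, true) else (φ ⟨pp (pp r), hQP _ hh⟩, false))
        = (((if hh : P r then (φ ⟨r, hh⟩, true) else (φ ⟨pp r, hQP r hh⟩, false)) : Fin N × Bool).1, !((if hh : P r then ((φ ⟨r, hh⟩ : Fin N), true) else (φ ⟨pp r, hQP r hh⟩, false)) : Fin N × Bool).2)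
      rw [dif_neg hnp, dif_pos h]
      have h3 : (⟨pp (pp r), hQP _ hnp⟩ : {r : M // P r}) = ⟨r, h⟩ :=
        Subtype.ext (hperp r)
      rw [h3]
      rfl
    · show (if hh : P (pp r) then (φ ⟨pp r, hh⟩, true) else (φ ⟨pp (pp r), hQP _ hh⟩, false))
        = (((if hh : P r then (φ ⟨r, hh⟩, true) else (φ ⟨pp r, hQP r hh⟩, false)) : Fin N × Bool).1, !((if hh : P r then ((φ ⟨r, hh⟩ : Fin N), true) else (φ ⟨pp r, hQP r hh⟩, false)) : Fin N × Bool).2)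
      rw [dif_pos (hQP r h), dif_neg h]
      rfl

end Aux

theorem stmt_15 {X : Type*} [Fintype X] (p q : ℕ) (hp : p.Prime) (hq : q.Prime)
    (hp3 : 3 ≤ p) (hX : Fintype.card X = p * q) :
    ∃ e : FactorPair X ≃
        MO (if p = q then (p * q).factorial / (2 * p.factorial * q.factorial)
            else (p * q).factorial / (p.factorial * q.factorial)),
      (∀ r s : FactorPair X, FactorPair.le r s ↔ MO.le (e r) (e s)) ∧
      (∀ r : FactorPair X, e (FactorPair.perp r) = MO.perp (e r)) := by
  classical
  have hcard : Nat.card X = p * q := by rw [Nat.card_eq_fintype_card, hX]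
  have hbt : botFP X ≠ topFP X := by
    obtain ⟨x, y, hxy⟩ := Fintype.exists_pair_of_one_lt_card (by
      rw [hX]
      calc 1 < 2 * 2 := by norm_num
        _ ≤ p * q := Nat.mul_le_mul (le_trans (by norm_num) hp3) hq.two_le)
    exact botFP_ne_topFP x y hxy
  have hmid := middle_le hp hq hcard
  have hFPcP : Nat.card (FPc X p) * (p.factorial * q.factorial) = (p * q).factorial :=
    card_FPc p q hp.ne_zero hq.ne_zero hcard
  rcases eq_or_ne p q with rfl | hpq
  · -- case p = q
    rw [if_pos rfl]
    set n : ℕ := (p * p).factorial / (2 * p.factorial * p.factorial) with hn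
    -- the perp involution on Middle X
    set F : Middle X → Middle X := fun r => ⟨r.1.perp, perp_middle r.1 r.2⟩ with hF
    have hF1 : ∀ r, F (F r) = r := fun r => Subtype.ext (perp_perp r.1)
    have hF2 : ∀ r, F r ≠ r := by
      intro r h
      have h1 : r.1.perp = r.1 := congrArg Subtype.val h
      have h2 : r.1.1.2 = r.1.1.1 := congrArg (fun z => z.1.1) h1
      have h3 : r.1.1.1 ≠ ⊤ := fun ht => r.2.2 ((eq_topFP_iff r.1).mpr ht)
      exact fp_fst_ne_snd r.1 h3 h2.symm
    obtain ⟨n₀, e₀, hc2, hspec⟩ := involutionPairing F hF1 hF2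
    -- cardinality of Middle X
    have hμ : Nat.card (Middle X) = Nat.card (FPc X p) := by
      refine Nat.card_eq_of_bijective (fun r => (⟨r.1, ?_⟩ : FPc X p)) ⟨?_, ?_⟩
      · rcases (middle_iff hp hp hcard r.1).mp r.2 with h | h <;> exact h
      · intro a b hab
        exact Subtype.ext (congrArg (fun z : FPc X p => z.1) hab)
      · intro a
        exact ⟨⟨a.1, (middle_iff hp hp hcard a.1).mpr (Or.inl a.2)⟩, Subtype.ext rfl⟩
    have hn₀ : n₀ = n := by
      have h1 : n₀ * (2 * p.factorial * p.factorial) = (p * p).factorial := by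
        rw [← hFPcP, ← hμ, hc2]
        ring
      rw [hn]
      exact (Nat.div_eq_of_eq_mul_left (by positivity) h1.symm).symm
    set e' : Middle X ≃ Fin n × Bool :=
      e₀.trans (Equiv.prodCongr (finCongr hn₀) (Equiv.refl Bool)) with he'def
    have he' : ∀ r : Middle X, e' ⟨r.1.perp, perp_middle r.1 r.2⟩ = ((e' r).1, !(e' r).2) := by
      intro r
      have h1 := hspec r
      show (finCongr hn₀ (e₀ (F r)).1, (e₀ (F r)).2) = ((e' r).1, !(e' r).2)
      rw [h1]
      rfl
    exact assemble hbt n e' he' hmid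
  · -- case p ≠ q
    rw [if_neg hpq]
    set n : ℕ := (p * q).factorial / (p.factorial * q.factorial) with hn
    have hNc : Nat.card (FPc X p) = n := by
      rw [hn]
      exact (Nat.div_eq_of_eq_mul_left (by positivity) hFPcP.symm).symm
    set φ : FPc X p ≃ Fin n := Finite.equivFinOfCardEq hNc with hφ
    set ψ : {r : Middle X // qcard r.1.1.1 = p} ≃ Fin n :=
      (⟨fun t => (⟨t.1.1, t.2⟩ : FPc X p),
        fun v => ⟨⟨v.1, (middle_iff hp hq hcard v.1).mpr (Or.inl v.2)⟩, v.2⟩,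
        fun t => Subtype.ext (Subtype.ext rfl),
        fun v => Subtype.ext rfl⟩ : {r : Middle X // qcard r.1.1.1 = p} ≃ FPc X p).trans φ
      with hψ
    obtain ⟨e', he'0⟩ := pairingOfSwap (M := Middle X)
      (P := fun r => qcard r.1.1.1 = p) (Q := fun r => qcard r.1.1.1 = q)
      (fun r => ⟨r.1.perp, perp_middle r.1 r.2⟩)
      (fun r => Subtype.ext (perp_perp r.1))
      (fun r => (middle_iff hp hq hcard r.1).mp r.2)
      (fun r hP hQ => hpq (hP.symm.trans hQ))
      (fun r hP => snd_card hp hq hcard r.1 hP)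
      (fun r hQ => snd_card' hp hq hcard r.1 hQ)
      n ψ
    exact assemble hbt n e' he'0 hmid
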